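/- Let w be an n×n real matrix with ⦀w⦀∞ ≤ 1 and |γ| < 1, and set s = (I - γw)^{-1}. Then the maximum column-sum norm of s satisfies ⦀s⦀₁ ≤ 1 + n‖w‖∞/(1-|γ|), where ‖w‖∞ = max_{i,j}|w_ij|. -/

import Mathlib

open Matrix BigOperators

/-- Column-sum norm bound for `s = (I - γ w)⁻¹` when `w` has row sums at most 1 and
`|γ| < 1`: `⦀s⦀₁ ≤ 1 + n ‖w‖∞ / (1 - |γ|)`, where `‖w‖∞` is the max-entry norm. -/
theorem inverse_col_sum_bound
    (n : ℕ) (w : Matrix (Fin n) (Fin n) ℝ)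
    (hw : ∀ i, ∑ j, |w i j| ≤ 1)
    (γ : ℝ) (hγ : |γ| < 1)
    (s : Matrix (Fin n) (Fin n) ℝ) (hs : s = (1 - γ • w)⁻¹) :
    ∀ j, ∑ i, |s i j| ≤ 1 + n * (⨆ i, ⨆ j', |w i j'|) / (1 - |γ|) := by
  intro j
  have hpos : (0:ℝ) < 1 - |γ| := by linarith
  set M : ℝ := ⨆ i, ⨆ j', |w i j'| with hM
  have hMb : ∀ k l, |w k l| ≤ M := by
    intro k l
    have h1 : |w k l| ≤ ⨆ j', |w k j'| :=
      le_ciSup (f := fun j' => |w k j'|) (Set.Finite.bddAbove (Set.finite_range _)) l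
    exact h1.trans
      (le_ciSup (f := fun i => ⨆ j', |w i j'|) (Set.Finite.bddAbove (Set.finite_range _)) k)
  have hM0 : 0 ≤ M := le_trans (abs_nonneg _) (hMb j j)
  by_cases hdet : IsUnit (1 - γ • w).det
  · have hinv : s * (1 - γ • w) = 1 := by
      rw [hs]; exact Matrix.nonsing_inv_mul _ hdet
    have heq : s = 1 + γ • (s * w) := by
      have h2 : s - γ • (s * w) = 1 := by
        rw [← hinv, Matrix.mul_sub, Matrix.mul_one, Matrix.mul_smul]
      rw [← h2]; abel
    have hentry : ∀ i l, s i l = (if i = l then (1:ℝ) else 0)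
        + γ * ∑ k, s i k * w k l := by
      intro i l
      conv_lhs => rw [heq]
      simp [Matrix.add_apply, Matrix.one_apply, Matrix.smul_apply, Matrix.mul_apply]
    -- row sums of s bounded by 1/(1-|γ|)
    have hrow : ∀ i, ∑ l, |s i l| ≤ 1 / (1 - |γ|) := by
      intro i
      have h1 : ∑ l, |s i l| ≤ 1 + |γ| * ∑ l, |s i l| := by
        have hterm : ∀ k, |s i k| * ∑ l, |w k l| ≤ |s i k| :=
          fun k => mul_le_of_le_one_right (abs_nonneg _) (hw k)
        have hsum : ∑ k, |s i k| * ∑ l, |w k l| ≤ ∑ k, |s i k| :=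
          Finset.sum_le_sum fun k _ => hterm k
        calc ∑ l, |s i l|
            ≤ ∑ l, ((if i = l then (1:ℝ) else 0)
              + |γ| * ∑ k, |s i k| * |w k l|) := by
              apply Finset.sum_le_sum; intro l _
              rw [hentry i l]
              refine (abs_add_le _ _).trans ?_
              gcongr
              · split <;> simp
              · rw [abs_mul]
                gcongr
                refine (Finset.abs_sum_le_sum_abs _ _).trans ?_
                apply le_of_eq
                exact Finset.sum_congr rfl fun k _ => abs_mul _ _
          _ = 1 + |γ| * ∑ k, |s i k| * ∑ l, |w k l| := by
              rw [Finset.sum_add_distrib]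
              congr 1
              · simp
              · rw [← Finset.mul_sum, Finset.sum_comm]
                congr 1
                exact Finset.sum_congr rfl fun k _ => (Finset.mul_sum _ _ _).symm
          _ ≤ 1 + |γ| * ∑ k, |s i k| := by
              nlinarith [abs_nonneg γ]
      rw [le_div_iff₀ hpos]
      nlinarith [Finset.sum_nonneg (fun l (_ : l ∈ Finset.univ) => abs_nonneg (s i l))]
    -- total sum
    have htot : ∑ i, ∑ k, |s i k| ≤ n * (1 / (1 - |γ|)) := by
      calc ∑ i, ∑ k, |s i k| ≤ ∑ _i : Fin n, 1 / (1 - |γ|) :=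
            Finset.sum_le_sum fun i _ => hrow i
        _ = n * (1 / (1 - |γ|)) := by simp [mul_comm]
    -- column sum bound
    calc ∑ i, |s i j|
        ≤ ∑ i, ((if i = j then (1:ℝ) else 0) + |γ| * (M * ∑ k, |s i k|)) := by
          apply Finset.sum_le_sum; intro i _
          rw [hentry i j]
          refine (abs_add_le _ _).trans ?_
          gcongr
          · split <;> simp
          · rw [abs_mul]
            gcongr
            refine (Finset.abs_sum_le_sum_abs _ _).trans ?_
            rw [Finset.mul_sum]
            apply Finset.sum_le_sum; intro k _
            calc |s i k * w k j| = |s i k| * |w k j| := abs_mul _ _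
              _ ≤ |s i k| * M := mul_le_mul_of_nonneg_left (hMb k j) (abs_nonneg _)
              _ = M * |s i k| := mul_comm _ _
      _ = 1 + |γ| * M * ∑ i, ∑ k, |s i k| := by
          rw [Finset.sum_add_distrib]
          congr 1
          · simp
          · simp_rw [← mul_assoc]
            rw [← Finset.mul_sum]
      _ ≤ 1 + |γ| * M * (n * (1 / (1 - |γ|))) := by
          gcongr
      _ ≤ 1 + n * M / (1 - |γ|) := by
          have hγ0 : |γ| ≤ 1 := le_of_lt hγ
          have hn : (0:ℝ) ≤ n := Nat.cast_nonneg n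
          have h1d : (0:ℝ) ≤ 1 / (1 - |γ|) := by positivity
          have hd := mul_le_mul_of_nonneg_right hγ0
            (mul_nonneg hM0 (mul_nonneg hn h1d))
          have hring : (n:ℝ) * M / (1 - |γ|) = M * ((n:ℝ) * (1 / (1 - |γ|))) := by
            field_simp
          have hring2 : |γ| * M * ((n:ℝ) * (1 / (1 - |γ|)))
              = |γ| * (M * ((n:ℝ) * (1 / (1 - |γ|)))) := by ring
          rw [hring, hring2]
          linarith [hd]
  · have hs0 : s = 0 := by
      rw [hs, Matrix.nonsing_inv_apply_not_isUnit _ hdet]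
    simp only [hs0, Matrix.zero_apply, abs_zero, Finset.sum_const_zero]
    positivity
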